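/- Let E be a set of jobs of an m-machine JIT flow-shop instance that admits a JIT schedule in which, for each machine i, the jobs of E are processed in the order σ_i. Then E also admits a JIT schedule with the same processing orders σ_1,…,σ_m in which, on each of the machines M_1,…,M_{m−1}, every job starts as soon as possible: the first job of σ_1 starts on M_1 at time 0, each subsequent job of σ_1 starts on M_1 at the completion time of its predecessor on M_1, and for 2 ≤ i ≤ m−1 the j-th job of σ_i starts on M_i at the maximum of the completion time of the (j−1)-st job of σ_i on M_i and the completion time of the j-th job of σ_i on M_{i−1}. -/

import Mathlib

open Finset

/-- A just-in-time flow-shop instance on `m` machines with jobs of type `J`: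
`p i j` is the (positive integer) processing time of job `j` on machine `i`,
`d j` its positive integer due date and `w j` its positive integer weight. -/
structure JITInstance (m : ℕ) (J : Type) where
  p : Fin m → J → ℕ
  d : J → ℕ
  w : J → ℕ
  p_pos : ∀ i j, 0 < p i j
  d_pos : ∀ j, 0 < d j
  w_pos : ∀ j, 0 < w j

/-- `S` is a JIT schedule of the job set `E`: on every machine the processing
intervals `(S i j, S i j + p i j]` of distinct jobs of `E` are pairwise disjoint,
each job's operation on machine `i+1` starts no earlier than its completion on
machine `i`, and every job of `E` completes on the last machine exactly at its
due date.  (Start times are nonnegative automatically, being naturals.) -/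
def IsJITSchedule {m : ℕ} {J : Type} (I : JITInstance m J)
    (E : Finset J) (S : Fin m → J → ℕ) : Prop :=
  (∀ i : Fin m, ∀ j ∈ E, ∀ j' ∈ E, j ≠ j' →
      S i j + I.p i j ≤ S i j' ∨ S i j' + I.p i j' ≤ S i j) ∧
  (∀ j ∈ E, ∀ i i' : Fin m, i'.val = i.val + 1 →
      S i j + I.p i j ≤ S i' j) ∧
  (∀ j ∈ E, ∀ i : Fin m, i.val = m - 1 →
      S i j + I.p i j = I.d j)

/-- A job set is feasible if it admits a JIT schedule. -/
def Feasible {m : ℕ} {J : Type} (I : JITInstance m J) (E : Finset J) : Prop :=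
  ∃ S : Fin m → J → ℕ, IsJITSchedule I E S

/-- any JIT schedule of a set `E` can be replaced by a JIT
schedule with the same processing order on every machine in which, on each of
the machines `M₁,…,M_{m-1}`, every job starts as soon as possible: its start
time equals the maximum of its completion time on the previous machine (`0` on
machine `M₁`) and the completion time of its predecessor on the same machine
(the supremum below, `0` if there is no predecessor). -/

noncomputable def asap {J : Type} (E : Finset J) (p r key : J → ℕ) (j : J) : ℕ :=
  max (r j) ((E.filter fun j' => key j' < key j).attach.sup
    fun j' => asap E p r key j'.1 + p j'.1)
termination_by (E.filter fun j' => key j' < key j).card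
decreasing_by
  apply Finset.card_lt_card
  have hm := Finset.mem_filter.mp j'.2
  refine (Finset.ssubset_iff_of_subset ?_).mpr ⟨j'.1, j'.2, ?_⟩
  · intro x hx
    have hx' := Finset.mem_filter.mp hx
    exact Finset.mem_filter.mpr ⟨hx'.1, hx'.2.trans hm.2⟩
  · intro hx
    exact absurd (Finset.mem_filter.mp hx).2 (lt_irrefl _)

lemma asap_eq {J : Type} (E : Finset J) (p r key : J → ℕ) (j : J) :
    asap E p r key j =
      max (r j) ((E.filter fun j' => key j' < key j).sup
        fun j' => asap E p r key j' + p j') := by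
  rw [asap]
  have := Finset.sup_attach (E.filter fun x => key x < key j)
    (fun x => asap E p r key x + p x)
  rw [this]

lemma r_le_asap {J : Type} (E : Finset J) (p r key : J → ℕ) (j : J) :
    r j ≤ asap E p r key j := by
  rw [asap_eq]; exact le_max_left _ _

lemma asap_pred {J : Type} (E : Finset J) (p r key : J → ℕ) {j j' : J}
    (hj' : j' ∈ E) (hk : key j' < key j) :
    asap E p r key j' + p j' ≤ asap E p r key j := by
  rw [asap_eq (j := j)]
  exact le_max_of_le_right (Finset.le_sup (f := fun j' => asap E p r key j' + p j') (Finset.mem_filter.mpr ⟨hj', hk⟩))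

lemma asap_filter_card_lt {J : Type} (E : Finset J) (key : J → ℕ) {j j' : J}
    (hj' : j' ∈ E.filter fun x => key x < key j) :
    (E.filter fun x => key x < key j').card < (E.filter fun x => key x < key j).card := by
  apply Finset.card_lt_card
  have hm := Finset.mem_filter.mp hj'
  refine (Finset.ssubset_iff_of_subset ?_).mpr ⟨j', hj', ?_⟩
  · intro x hx
    have hx' := Finset.mem_filter.mp hx
    exact Finset.mem_filter.mpr ⟨hx'.1, hx'.2.trans hm.2⟩
  · intro hx
    exact absurd (Finset.mem_filter.mp hx).2 (lt_irrefl _)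

lemma asap_le {J : Type} (E : Finset J) (p r key : J → ℕ) (g : J → ℕ)
    (hr : ∀ j ∈ E, r j ≤ g j)
    (hg : ∀ j ∈ E, ∀ j' ∈ E, key j' < key j → g j' + p j' ≤ g j) :
    ∀ j ∈ E, asap E p r key j ≤ g j := by
  suffices H : ∀ n, ∀ j ∈ E, (E.filter fun j' => key j' < key j).card ≤ n →
      asap E p r key j ≤ g j by
    exact fun j hj => H _ j hj le_rfl
  intro n
  induction n using Nat.strong_induction_on with
  | _ n ih =>
    intro j hj hc
    rw [asap_eq]
    apply max_le (hr j hj)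
    apply Finset.sup_le
    intro j' hj'
    have hm := Finset.mem_filter.mp hj'
    have hcard := asap_filter_card_lt E key hj'
    calc asap E p r key j' + p j' ≤ g j' + p j' := by
          exact Nat.add_le_add_right (ih _ (lt_of_lt_of_le hcard hc) j' hm.1 le_rfl) _
      _ ≤ g j := hg j hj j' hm.1 hm.2

noncomputable def asapT {J : Type} (E : Finset J) (pN SN : ℕ → J → ℕ) : ℕ → J → ℕ
  | 0 => asap E (pN 0) (fun _ => 0) (SN 0)
  | (i+1) => asap E (pN (i+1)) (fun j => asapT E pN SN i j + pN i j) (SN (i+1))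

lemma asapT_is_asap {J : Type} (E : Finset J) (pN SN : ℕ → J → ℕ) (i : ℕ) :
    ∃ r, asapT E pN SN i = asap E (pN i) r (SN i) := by
  cases i with
  | zero => exact ⟨_, rfl⟩
  | succ k => exact ⟨_, rfl⟩

lemma asapT_eq {J : Type} (E : Finset J) (pN SN : ℕ → J → ℕ) (i : ℕ) (j : J) :
    asapT E pN SN i j =
      max (if i = 0 then 0 else asapT E pN SN (i - 1) j + pN (i - 1) j)
        ((E.filter fun x => SN i x < SN i j).sup
          fun x => asapT E pN SN i x + pN i x) := by
  cases i with
  | zero =>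
    rw [show asapT E pN SN 0 = asap E (pN 0) (fun _ => 0) (SN 0) from rfl]
    rw [asap_eq]
    simp
  | succ k =>
    rw [show asapT E pN SN (k+1) =
      asap E (pN (k+1)) (fun x => asapT E pN SN k x + pN k x) (SN (k+1)) from rfl]
    rw [asap_eq]
    simp [Nat.succ_sub_one]

theorem jit_exists_asap_schedule {m : ℕ} {J : Type} [DecidableEq J]
    (I : JITInstance m J) (E : Finset J) (S : Fin m → J → ℕ)
    (hS : IsJITSchedule I E S) :
    ∃ S' : Fin m → J → ℕ, IsJITSchedule I E S' ∧
      (∀ i : Fin m, ∀ j ∈ E, ∀ j' ∈ E, (S' i j < S' i j' ↔ S i j < S i j')) ∧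
      (∀ j ∈ E, ∀ i : Fin m, i.val + 1 < m →
        S' i j =
          max
            (if i.val = 0 then 0
             else S' ⟨i.val - 1, lt_of_le_of_lt (Nat.sub_le _ _) i.isLt⟩ j
                  + I.p ⟨i.val - 1, lt_of_le_of_lt (Nat.sub_le _ _) i.isLt⟩ j)
            ((E.filter (fun j' => S' i j' < S' i j)).sup
              (fun j' => S' i j' + I.p i j'))) := by
  obtain ⟨hd, hprec, hdue⟩ := hS
  set pN : ℕ → J → ℕ := fun i j => if h : i < m then I.p ⟨i, h⟩ j else 1 with hpN_def
  set SN : ℕ → J → ℕ := fun i j => if h : i < m then S ⟨i, h⟩ j else 0 with hSN_def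
  have hpN : ∀ (iv : ℕ) (h : iv < m) (j : J), pN iv j = I.p ⟨iv, h⟩ j :=
    fun iv h j => dif_pos h
  have hSN : ∀ (iv : ℕ) (h : iv < m) (j : J), SN iv j = S ⟨iv, h⟩ j :=
    fun iv h j => dif_pos h
  -- if a job starts earlier on a machine, it also finishes no later than the other starts
  have horder : ∀ (i : Fin m), ∀ j ∈ E, ∀ j' ∈ E, S i j' < S i j →
      S i j' + I.p i j' ≤ S i j := by
    intro i j hj j' hj' hlt
    rcases eq_or_ne j j' with rfl | hne
    · exact absurd hlt (lt_irrefl _)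
    · rcases hd i j hj j' hj' hne with h | h
      · omega
      · exact h
  have hinj : ∀ (i : Fin m), ∀ j ∈ E, ∀ j' ∈ E, S i j = S i j' → j = j' := by
    intro i j hj j' hj' he
    by_contra hne
    have hp1 := I.p_pos i j
    have hp2 := I.p_pos i j'
    rcases hd i j hj j' hj' hne with h | h <;> omega
  -- the ASAP schedule is always at most the given one
  have hTle : ∀ (iv : ℕ) (h : iv < m), ∀ j ∈ E, asapT E pN SN iv j ≤ S ⟨iv, h⟩ j := by
    intro iv
    induction iv with
    | zero =>
      intro h j hj
      rw [show asapT E pN SN 0 = asap E (pN 0) (fun _ => 0) (SN 0) from rfl]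
      refine asap_le E (pN 0) _ (SN 0) (fun x => S ⟨0, h⟩ x) (fun x _ => Nat.zero_le _) ?_ j hj
      intro x hx y hy hk
      rw [hSN 0 h, hSN 0 h] at hk
      rw [hpN 0 h]
      exact horder ⟨0, h⟩ x hx y hy hk
    | succ k ih =>
      intro h j hj
      rw [show asapT E pN SN (k+1) =
        asap E (pN (k+1)) (fun x => asapT E pN SN k x + pN k x) (SN (k+1)) from rfl]
      have hk' : k < m := Nat.lt_of_succ_lt h
      refine asap_le E (pN (k+1)) _ (SN (k+1)) (fun x => S ⟨k+1, h⟩ x) ?_ ?_ j hj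
      · intro x hx
        show asapT E pN SN k x + pN k x ≤ S ⟨k+1, h⟩ x
        have h1 : asapT E pN SN k x ≤ S ⟨k, hk'⟩ x := ih hk' x hx
        have h2 : S ⟨k, hk'⟩ x + I.p ⟨k, hk'⟩ x ≤ S ⟨k+1, h⟩ x :=
          hprec x hx ⟨k, hk'⟩ ⟨k+1, h⟩ rfl
        rw [hpN k hk']
        omega
      · intro x hx y hy hkk
        rw [hSN (k+1) h, hSN (k+1) h] at hkk
        rw [hpN (k+1) h]
        exact horder ⟨k+1, h⟩ x hx y hy hkk
  -- per-machine disjointness of the ASAP schedule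
  have hTdisj : ∀ (iv : ℕ) (h : iv < m), ∀ j ∈ E, ∀ j' ∈ E,
      S ⟨iv, h⟩ j' < S ⟨iv, h⟩ j →
      asapT E pN SN iv j' + I.p ⟨iv, h⟩ j' ≤ asapT E pN SN iv j := by
    intro iv h j hj j' hj' hlt
    obtain ⟨r, hr⟩ := asapT_is_asap E pN SN iv
    rw [hr]
    have hk : SN iv j' < SN iv j := by rw [hSN iv h, hSN iv h]; exact hlt
    have := asap_pred E (pN iv) r (SN iv) hj' hk
    rw [hpN iv h] at this
    exact this
  -- the ASAP schedule preserves the processing orders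
  have hTorder : ∀ (iv : ℕ) (h : iv < m), ∀ j ∈ E, ∀ j' ∈ E,
      (asapT E pN SN iv j < asapT E pN SN iv j' ↔ S ⟨iv, h⟩ j < S ⟨iv, h⟩ j') := by
    intro iv h j hj j' hj'
    constructor
    · intro hlt
      rcases lt_trichotomy (S ⟨iv, h⟩ j) (S ⟨iv, h⟩ j') with h1 | h1 | h1
      · exact h1
      · rw [hinj ⟨iv, h⟩ j hj j' hj' h1] at hlt
        exact absurd hlt (lt_irrefl _)
      · have := hTdisj iv h j hj j' hj' h1
        have := I.p_pos ⟨iv, h⟩ j'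
        omega
    · intro h1
      have := hTdisj iv h j' hj' j hj h1
      have := I.p_pos ⟨iv, h⟩ j
      omega
  refine ⟨fun i j => if i.val + 1 < m then asapT E pN SN i.val j else S i j,
    ⟨?_, ?_, ?_⟩, ?_, ?_⟩
  · -- disjointness
    intro i j hj j' hj' hne
    by_cases hi : i.val + 1 < m
    · simp only [if_pos hi]
      have hne' : S i j ≠ S i j' := fun he => hne (hinj i j hj j' hj' he)
      rcases hne'.lt_or_gt with h1 | h1
      · exact Or.inl (hTdisj i.val i.isLt j' hj' j hj h1)
      · exact Or.inr (hTdisj i.val i.isLt j hj j' hj' h1)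
    · simp only [if_neg hi]
      exact hd i j hj j' hj' hne
  · -- precedence between consecutive machines
    intro j hj i i' hii'
    by_cases hi' : i'.val + 1 < m
    · have hi : i.val + 1 < m := by omega
      simp only [if_pos hi, if_pos hi']
      have h1 : asapT E pN SN i.val j + pN i.val j ≤ asapT E pN SN (i.val + 1) j :=
        r_le_asap E (pN (i.val+1)) (fun x => asapT E pN SN i.val x + pN i.val x)
          (SN (i.val+1)) j
      rw [hpN i.val i.isLt] at h1
      rw [hii']
      exact h1
    · simp only [if_neg hi']
      by_cases hi : i.val + 1 < m
      · simp only [if_pos hi]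
        have h1 : asapT E pN SN i.val j ≤ S i j := hTle i.val i.isLt j hj
        have h2 := hprec j hj i i' hii'
        omega
      · simp only [if_neg hi]
        exact hprec j hj i i' hii'
  · -- due dates
    intro j hj i hi
    have hnot : ¬ (i.val + 1 < m) := by
      have := i.isLt; omega
    simp only [if_neg hnot]
    exact hdue j hj i hi
  · -- order preservation
    intro i j hj j' hj'
    by_cases hi : i.val + 1 < m
    · simp only [if_pos hi]
      exact hTorder i.val i.isLt j hj j' hj'
    · simp only [if_neg hi]
  · -- the ASAP fixed-point equation
    intro j hj i hi
    simp only [if_pos hi]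
    conv_lhs => rw [asapT_eq]
    congr 1
    · -- the release part
      by_cases h0 : i.val = 0
      · simp [h0]
      · simp only [if_neg h0]
        have h1 : i.val - 1 + 1 = i.val := Nat.succ_pred_eq_of_pos (Nat.pos_of_ne_zero h0)
        have h2 : i.val - 1 + 1 < m := by omega
        simp only [if_pos h2]
        have h3 : i.val - 1 < m := by omega
        rw [hpN (i.val - 1) h3]
    · -- the predecessor-completion part
      have hfil : E.filter (fun x => SN i.val x < SN i.val j) =
          E.filter (fun x => asapT E pN SN i.val x < asapT E pN SN i.val j) := by
        apply Finset.filter_congr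
        intro x hx
        rw [hSN i.val i.isLt, hSN i.val i.isLt]
        exact ⟨fun h => (hTorder i.val i.isLt x hx j hj).mpr h,
          fun h => (hTorder i.val i.isLt x hx j hj).mp h⟩
      rw [← hfil]
      apply Finset.sup_congr rfl
      intro x hx
      have hxE : x ∈ E := (Finset.mem_filter.mp hx).1
      rw [hpN i.val i.isLt]
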